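/- Let G be a finite connected simple graph with at least four vertices and let v be a vertex of G of degree 2 whose two (distinct) neighbours u and w are adjacent in G. Then the graph G − v obtained by deleting v (and its two incident edges) is connected and has the same genus as G. -/

import Mathlib

theorem Equiv.Perm.apply_inv_self {α : Type*} (σ : Equiv.Perm α) (x : α) : σ (σ⁻¹ x) = x :=
  (Equiv.eq_symm_apply σ).mp rfl

theorem Equiv.Perm.inv_apply_self {α : Type*} (σ : Equiv.Perm α) (x : α) : σ⁻¹ (σ x) = x :=
  Equiv.Perm.inv_eq_iff_eq.mpr rfl


namespace Genus

open SimpleGraph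

variable {V : Type*} (G : SimpleGraph V)

/-- The dart-reversal involution, as a permutation of the darts. -/
def dartRev : Equiv.Perm G.Dart where
  toFun d := d.symm
  invFun d := d.symm
  left_inv d := d.symm_symm
  right_inv d := d.symm_symm

/-- A rotation system on `G`: a permutation of the darts sending each dart to a dart
with the same initial vertex, whose restriction to the darts leaving any fixed vertex
is a single cycle (equivalently, acts transitively on them). -/
def IsRotationSystem (σ : Equiv.Perm G.Dart) : Prop :=
  (∀ d : G.Dart, (σ d).fst = d.fst) ∧
    ∀ d d' : G.Dart, d.fst = d'.fst → ∃ n : ℕ, (σ ^ n) d = d'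

/-- The face permutation `φ(d) = σ(d̄)` of the embedding `(G, σ)`. -/
def facePerm (σ : Equiv.Perm G.Dart) : Equiv.Perm G.Dart := σ * dartRev G

/-- Two darts are equivalent iff they lie in the same face (same orbit of `φ`). -/
def faceSetoid (σ : Equiv.Perm G.Dart) : Setoid G.Dart :=
  ⟨(facePerm G σ).SameCycle,
    ⟨fun x => Equiv.Perm.SameCycle.refl _ x, fun h => h.symm, fun h h' => h.trans h'⟩⟩

/-- The number of faces of the embedding `(G, σ)`: the number of orbits of the
face permutation on the darts. -/
noncomputable def numFaces (σ : Equiv.Perm G.Dart) : ℕ :=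
  Nat.card (Quotient (faceSetoid G σ))

/-- `faceSize G σ e` is `f(e)`, the number of darts in the face containing `e`. -/
noncomputable def faceSize (σ : Equiv.Perm G.Dart) (e : G.Dart) : ℕ :=
  Nat.card {d : G.Dart // (facePerm G σ).SameCycle e d}

/-- The genus `1 + (|E| - |V| - |F|)/2` of the embedding `(G, σ)`. -/
noncomputable def embGenus [Fintype V] (σ : Equiv.Perm G.Dart) : ℚ :=
  1 + ((Nat.card G.edgeSet : ℚ) - (Nat.card V : ℚ) - (numFaces G σ : ℚ)) / 2

/-- The set of genera of all embeddings of `G`; the genus of `G` is its minimum. -/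
def genusSet [Fintype V] : Set ℚ :=
  {g : ℚ | ∃ σ : Equiv.Perm G.Dart, IsRotationSystem G σ ∧ embGenus G σ = g}

/-- A facial-like walk: a cyclic sequence of `k` pairwise distinct darts such that each dart
starts at the end vertex of the previous one, and a dart is followed by its reverse
iff its end vertex has degree 1. -/
def IsFacialLikeWalk [Fintype V] [DecidableRel G.Adj] {k : ℕ} (w : Fin k → G.Dart) : Prop :=
  ∃ hk : 0 < k, Function.Injective w ∧
    ∀ i : Fin k,
      (w ⟨(i + 1) % k, Nat.mod_lt _ hk⟩).fst = (w i).snd ∧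
        (w ⟨(i + 1) % k, Nat.mod_lt _ hk⟩ = (w i).symm ↔ G.degree (w i).snd = 1)

/-- `fw G e` is `f_w(e)`, the length of a shortest facial-like walk containing the dart `e`. -/
noncomputable def fw [Fintype V] [DecidableRel G.Adj] (e : G.Dart) : ℕ :=
  sInf {k : ℕ | ∃ w : Fin k → G.Dart, IsFacialLikeWalk G w ∧ ∃ i, w i = e}

end Genus

namespace DelAux
open Equiv Equiv.Perm

variable {α β : Type*}

noncomputable def cyc (π : Equiv.Perm α) : ℕ :=
  Nat.card (Quotient (Equiv.Perm.SameCycle.setoid π))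

lemma pow_succ_apply {π : Perm α} (n : ℕ) (x : α) : (π ^ (n+1)) x = π ((π ^ n) x) := by
  rw [pow_succ', Perm.mul_apply]

lemma sameCycle_of_pow {π : Perm α} {x y : α} (n : ℕ) (h : (π ^ n) x = y) :
    π.SameCycle x y := ⟨(n : ℤ), by simp [h]⟩

lemma sameCycle_iff_pow [Finite α] {π : Perm α} {x y : α} :
    π.SameCycle x y ↔ ∃ n : ℕ, (π ^ n) x = y := by
  constructor
  · intro h
    obtain ⟨i, _, hi⟩ := h.exists_pow_eq'
    exact ⟨i, hi⟩
  · rintro ⟨n, h⟩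
    exact sameCycle_of_pow n h

section swap
variable [Finite α] [DecidableEq α] {π : Perm α} {x y : α}

/-- If `x` and `y` are in different cycles of `π`, multiplying by the swap merges them. -/
lemma merge_sameCycle (h : ¬ π.SameCycle x y) :
    (Equiv.swap x y * π).SameCycle x y := by
  have hex : ∃ n, 0 < n ∧ (π ^ n) x = x := by
    refine ⟨orderOf π, ?_, by simp [pow_orderOf_eq_one]⟩
    have : IsOfFinOrder π := isOfFinOrder_of_finite π
    exact orderOf_pos_iff.mpr this
  classical
  set m := Nat.find hex with hmdef
  obtain ⟨hm0, hmx⟩ : 0 < m ∧ (π ^ m) x = x := Nat.find_spec hex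
  have hmin : ∀ k, k < m → ¬ (0 < k ∧ (π ^ k) x = x) := fun k hk => Nat.find_min hex hk
  have hy : ∀ k : ℕ, (π ^ k) x ≠ y := fun k hc => h (sameCycle_of_pow k hc)
  have key : ∀ k, k < m → ((Equiv.swap x y * π) ^ k) x = (π ^ k) x := by
    intro k hk
    induction k with
    | zero => simp
    | succ k ih =>
      rw [pow_succ_apply, pow_succ_apply, ih (by omega), Perm.mul_apply,
        ← pow_succ_apply]
      exact Equiv.swap_apply_of_ne_of_ne
        (fun hc => hmin (k+1) hk ⟨by omega, hc⟩) (hy (k+1))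
  apply sameCycle_of_pow m
  obtain ⟨m', hm'⟩ : ∃ m', m = m' + 1 := ⟨m - 1, by omega⟩
  rw [hm']
  rw [hm'] at hmx
  rw [pow_succ_apply, key m' (by omega : m' < m), Perm.mul_apply, ← pow_succ_apply, hmx]
  exact Equiv.swap_apply_left x y

lemma cyc_swap_mul_of_sameCycle (hxy : x ≠ y) (h : π.SameCycle x y) :
    cyc (Equiv.swap x y * π) = cyc π + 1 := by
  classical
  set ρ := Equiv.swap x y * π with hρ
  have hρa : ∀ c, ρ c = Equiv.swap x y (π c) := fun c => rfl
  -- f0 : one step of ρ stays in the same π-cycle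
  have f0 : ∀ c, π.SameCycle c (ρ c) := by
    intro c
    rw [hρa]
    by_cases h1 : π c = x
    · rw [h1, Equiv.swap_apply_left]
      exact ((sameCycle_apply_right.mpr (SameCycle.refl π c)).trans (h1 ▸ h : π.SameCycle (π c) y))
    · by_cases h2 : π c = y
      · rw [h2, Equiv.swap_apply_right]
        exact ((sameCycle_apply_right.mpr (SameCycle.refl π c)).trans (h2 ▸ h.symm : π.SameCycle (π c) x))
      · rw [Equiv.swap_apply_of_ne_of_ne h1 h2]
        exact sameCycle_apply_right.mpr (SameCycle.refl π c)
  -- f1 : ρ-equivalence implies π-equivalence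
  have f1 : ∀ a b, ρ.SameCycle a b → π.SameCycle a b := by
    intro a b hab
    rw [sameCycle_iff_pow] at hab
    obtain ⟨n, rfl⟩ := hab
    induction n with
    | zero => simp only [pow_zero, Perm.one_apply]; exact SameCycle.refl π a
    | succ n ih => rw [pow_succ_apply]; exact ih.trans (f0 _)
  -- f3 : away from the cycle of x, ρ and π agree
  have f3 : ∀ a, ¬ π.SameCycle a x → ∀ n : ℕ, (ρ ^ n) a = (π ^ n) a := by
    intro a ha n
    induction n with
    | zero => rfl
    | succ n ih =>
      rw [pow_succ_apply, pow_succ_apply, ih, hρa, ← pow_succ_apply]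
      refine Equiv.swap_apply_of_ne_of_ne (fun hc => ha (sameCycle_of_pow _ hc)) ?_
      intro hc
      exact ha ((sameCycle_of_pow _ hc).trans h.symm)
  have f3' : ∀ a b, π.SameCycle a b → ¬ π.SameCycle a x → ρ.SameCycle a b := by
    intro a b hab ha
    rw [sameCycle_iff_pow] at hab ⊢
    obtain ⟨n, rfl⟩ := hab
    exact ⟨n, f3 a ha n⟩
  -- f4 : the π-cycle of x splits into at most the ρ-cycles of x and y
  have f4 : ∀ a, π.SameCycle x a → ρ.SameCycle x a ∨ ρ.SameCycle y a := by
    intro a ha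
    rw [sameCycle_iff_pow] at ha
    obtain ⟨n, rfl⟩ := ha
    induction n with
    | zero => exact Or.inl (SameCycle.refl ρ x)
    | succ n ih =>
      rw [pow_succ_apply]
      by_cases h1 : π ((π ^ n) x) = x
      · rw [h1]; exact Or.inl (SameCycle.refl ρ x)
      · by_cases h2 : π ((π ^ n) x) = y
        · rw [h2]; exact Or.inr (SameCycle.refl ρ y)
        · have : ρ ((π ^ n) x) = π ((π ^ n) x) := by
            rw [hρa, Equiv.swap_apply_of_ne_of_ne h1 h2]
          rcases ih with ih | ih
          · exact Or.inl (this ▸ sameCycle_apply_right.mpr ih)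
          · exact Or.inr (this ▸ sameCycle_apply_right.mpr ih)
  -- f2 : x and y are not ρ-equivalent
  have f2 : ¬ ρ.SameCycle x y := by
    have hex : ∃ n : ℕ, (π ^ n) x = y := sameCycle_iff_pow.mp h
    set m := Nat.find hex with hmdef
    have hmy : (π ^ m) x = y := Nat.find_spec hex
    have hm0 : 0 < m := by
      rcases Nat.eq_zero_or_pos m with h0 | h0
      · exfalso; apply hxy; rw [← hmy, h0, pow_zero]; rfl
      · exact h0
    have hmin : ∀ k, k < m → (π ^ k) x ≠ y := fun k hk => Nat.find_min hex hk
    have C : ∀ j : ℕ, ∃ k, k < m ∧ (ρ ^ j) x = (π ^ k) x := by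
      intro j
      induction j with
      | zero => exact ⟨0, hm0, rfl⟩
      | succ j ih =>
        obtain ⟨k, hk, hkeq⟩ := ih
        rw [pow_succ_apply, hkeq, hρa, ← pow_succ_apply]
        by_cases h1 : (π ^ (k+1)) x = y
        · have hk1 : k + 1 = m := by
            rcases Nat.lt_or_ge (k+1) m with hlt | hge
            · exact absurd h1 (hmin _ hlt)
            · omega
          rw [h1, Equiv.swap_apply_right]
          exact ⟨0, hm0, rfl⟩
        · by_cases h2 : (π ^ (k+1)) x = x
          · exfalso
            have hk1 : k + 1 < m ∨ k + 1 = m := by omega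
            rcases hk1 with hlt | heq
            · apply hmin (m - (k+1)) (by omega)
              have : (π ^ (m - (k+1))) ((π ^ (k+1)) x) = (π ^ m) x := by
                rw [← Perm.mul_apply, ← pow_add]
                congr 2
                omega
              rw [h2] at this
              rw [this, hmy]
            · rw [heq, hmy] at h2; exact hxy h2.symm
          · rw [Equiv.swap_apply_of_ne_of_ne h2 h1]
            refine ⟨k+1, ?_, rfl⟩
            rcases Nat.lt_or_ge (k+1) m with hlt | hge
            · exact hlt
            · exfalso; apply h1; have : k + 1 = m := by omega
              rw [this, hmy]
    intro hc
    rw [sameCycle_iff_pow] at hc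
    obtain ⟨j, hj⟩ := hc
    obtain ⟨k, hk, hkeq⟩ := C j
    rw [hkeq] at hj
    exact hmin k hk hj
  -- now the cardinality computation
  haveI : Finite (Quotient (SameCycle.setoid π)) := Quotient.finite _
  haveI : Finite (Quotient (SameCycle.setoid ρ)) := Quotient.finite _
  have hle1 : cyc ρ ≤ cyc π + 1 := by
    have hF : ∃ F : Quotient (SameCycle.setoid ρ) → Quotient (SameCycle.setoid π) ⊕ Unit,
        Function.Injective F := by
      refine ⟨Quotient.lift
        (fun a => if ρ.SameCycle x a then Sum.inr () else Sum.inl (⟦a⟧ : Quotient (SameCycle.setoid π)))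
        ?_, ?_⟩
      · intro a b hab
        have hab' : ρ.SameCycle a b := hab
        by_cases hxa : ρ.SameCycle x a
        · rw [if_pos hxa, if_pos (hxa.trans hab')]
        · rw [if_neg hxa, if_neg (fun hc => hxa (hc.trans hab'.symm))]
          exact congrArg _ (Quotient.sound (f1 a b hab'))
      · intro qa qb
        induction qa using Quotient.ind with | _ a =>
        induction qb using Quotient.ind with | _ b =>
        simp only [Quotient.lift_mk]
        by_cases hxa : ρ.SameCycle x a <;> by_cases hxb : ρ.SameCycle x b
        · rw [if_pos hxa, if_pos hxb]
          intro _; exact Quotient.sound (hxa.symm.trans hxb)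
        · rw [if_pos hxa, if_neg hxb]; intro hc; exact absurd hc (by simp)
        · rw [if_neg hxa, if_pos hxb]; intro hc; exact absurd hc (by simp)
        · rw [if_neg hxa, if_neg hxb]
          intro hc
          have hab : π.SameCycle a b := Quotient.exact (Sum.inl.inj hc)
          apply Quotient.sound
          by_cases hax : π.SameCycle a x
          · have h1 : ρ.SameCycle y a := by
              rcases f4 a hax.symm with h' | h'
              · exact absurd h' hxa
              · exact h'
            have h2 : ρ.SameCycle y b := by
              rcases f4 b (hab.symm.trans hax).symm with h' | h'
              · exact absurd h' hxb
              · exact h'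
            exact (h1.symm.trans h2 : ρ.SameCycle a b)
          · exact f3' a b hab hax
    obtain ⟨F, hF⟩ := hF
    calc cyc ρ ≤ Nat.card (Quotient (SameCycle.setoid π) ⊕ Unit) :=
          Nat.card_le_card_of_injective F hF
      _ = cyc π + 1 := by rw [Nat.card_sum]; simp [cyc]
  have hle2 : cyc π + 1 ≤ cyc ρ := by
    have hG : ∃ G : Quotient (SameCycle.setoid π) ⊕ Unit → Quotient (SameCycle.setoid ρ),
        Function.Injective G := by
      refine ⟨fun q => match q with
        | Sum.inl qq => Quotient.lift (fun a =>
            if π.SameCycle a x then (⟦x⟧ : Quotient (SameCycle.setoid ρ)) else ⟦a⟧) ?_ qq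
        | Sum.inr _ => ⟦y⟧, ?_⟩
      · intro a b hab
        have hab' : π.SameCycle a b := hab
        by_cases hax : π.SameCycle a x
        · rw [if_pos hax, if_pos (hab'.symm.trans hax)]
        · rw [if_neg hax, if_neg (fun hc => hax (hab'.trans hc))]
          exact Quotient.sound (f3' a b hab' hax)
      · intro qa qb
        match qa, qb with
        | Sum.inl qa, Sum.inl qb =>
          induction qa using Quotient.ind with | _ a =>
          induction qb using Quotient.ind with | _ b =>
          intro hc
          simp only [Quotient.lift_mk] at hc
          congr 1
          apply Quotient.sound
          by_cases hax : π.SameCycle a x <;> by_cases hbx : π.SameCycle b x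
          · exact hax.trans hbx.symm
          · rw [if_pos hax, if_neg hbx] at hc
            exact absurd (f1 x b (Quotient.exact hc)).symm hbx
          · rw [if_neg hax, if_pos hbx] at hc
            exact absurd (f1 a x (Quotient.exact hc)) hax
          · rw [if_neg hax, if_neg hbx] at hc
            exact f1 a b (Quotient.exact hc)
        | Sum.inl qa, Sum.inr _ =>
          induction qa using Quotient.ind with | _ a =>
          intro hc
          simp only [Quotient.lift_mk] at hc
          exfalso
          by_cases hax : π.SameCycle a x
          · rw [if_pos hax] at hc
            exact f2 (Quotient.exact hc)
          · rw [if_neg hax] at hc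
            exact hax ((f1 a y (Quotient.exact hc)).trans h.symm)
        | Sum.inr _, Sum.inl qb =>
          induction qb using Quotient.ind with | _ b =>
          intro hc
          simp only [Quotient.lift_mk] at hc
          exfalso
          by_cases hbx : π.SameCycle b x
          · rw [if_pos hbx] at hc
            exact f2 (Quotient.exact hc.symm)
          · rw [if_neg hbx] at hc
            exact hbx ((f1 b y (Quotient.exact hc.symm)).trans h.symm)
        | Sum.inr _, Sum.inr _ => intro _; rfl
    obtain ⟨G, hG⟩ := hG
    calc cyc π + 1 = Nat.card (Quotient (SameCycle.setoid π) ⊕ Unit) := by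
          rw [Nat.card_sum]; simp [cyc]
      _ ≤ cyc ρ := Nat.card_le_card_of_injective G hG
  omega


lemma cyc_swap_mul_of_not_sameCycle (hxy : x ≠ y) (h : ¬ π.SameCycle x y) :
    cyc π = cyc (Equiv.swap x y * π) + 1 := by
  have h2 := cyc_swap_mul_of_sameCycle hxy (merge_sameCycle h)
  rwa [Equiv.swap_mul_self_mul] at h2

end swap

section extend
variable [Finite α]

/-- Extending a permutation by fixed points adds the number of fixed points to the
cycle count. -/
lemma cyc_extend {ι : β → α} (hι : Function.Injective ι) (π' : Perm β) (ψ : Perm α)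
    (hcomm : ∀ e, ψ (ι e) = ι (π' e)) (hfix : ∀ x : α, (∀ e, ι e ≠ x) → ψ x = x) :
    cyc ψ = cyc π' + Nat.card {x : α // ∀ e, ι e ≠ x} := by
  classical
  haveI : Finite β := Finite.of_injective ι hι
  have g1 : ∀ (n : ℕ) (e : β), (ψ ^ n) (ι e) = ι ((π' ^ n) e) := by
    intro n e
    induction n with
    | zero => simp
    | succ n ih => rw [pow_succ_apply, ih, hcomm, ← pow_succ_apply]
  have g2 : ∀ e e' : β, ψ.SameCycle (ι e) (ι e') ↔ π'.SameCycle e e' := by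
    intro e e'
    rw [sameCycle_iff_pow, sameCycle_iff_pow]
    constructor
    · rintro ⟨n, hn⟩; exact ⟨n, hι (by rw [← g1, hn])⟩
    · rintro ⟨n, hn⟩; exact ⟨n, by rw [g1, hn]⟩
  have g3 : ∀ x : α, (∀ e, ι e ≠ x) → ∀ z, ψ.SameCycle x z → z = x := by
    intro x hx z hz
    exact (hz.eq_of_left (hfix x hx)).symm
  set F : Quotient (SameCycle.setoid ψ) → Quotient (SameCycle.setoid π') ⊕ {x : α // ∀ e, ι e ≠ x} :=
    Quotient.lift (fun x =>
      if h : ∃ e, ι e = x then Sum.inl (⟦Classical.choose h⟧ : Quotient (SameCycle.setoid π'))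
      else Sum.inr ⟨x, fun e hc => h ⟨e, hc⟩⟩) (by
        intro x z hxz
        have hxz' : ψ.SameCycle x z := hxz
        by_cases h1 : ∃ e, ι e = x <;> by_cases h2 : ∃ e, ι e = z
        · rw [dif_pos h1, dif_pos h2]
          congr 1
          apply Quotient.sound
          have := hxz'
          rw [← Classical.choose_spec h1, ← Classical.choose_spec h2, g2] at this
          exact this
        · exfalso
          have := g3 z (fun e hc => h2 ⟨e, hc⟩) x hxz'.symm
          exact h2 (this ▸ h1)
        · exfalso
          have := g3 x (fun e hc => h1 ⟨e, hc⟩) z hxz'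
          exact h1 (this ▸ h2)
        · rw [dif_neg h1, dif_neg h2]
          have := g3 x (fun e hc => h1 ⟨e, hc⟩) z hxz'
          subst this
          rfl) with hF
  have hbij : Function.Bijective F := by
    constructor
    · intro qa qb
      induction qa using Quotient.ind with | _ x =>
      induction qb using Quotient.ind with | _ z =>
      simp only [hF, Quotient.lift_mk]
      by_cases h1 : ∃ e, ι e = x <;> by_cases h2 : ∃ e, ι e = z
      · rw [dif_pos h1, dif_pos h2]
        intro hc
        apply Quotient.sound
        have h3 : π'.SameCycle (Classical.choose h1) (Classical.choose h2) :=
          Quotient.exact (Sum.inl.inj hc)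
        rw [← g2] at h3
        rw [Classical.choose_spec h1, Classical.choose_spec h2] at h3
        exact h3
      · rw [dif_pos h1, dif_neg h2]; intro hc; exact absurd hc (by simp)
      · rw [dif_neg h1, dif_pos h2]; intro hc; exact absurd hc (by simp)
      · rw [dif_neg h1, dif_neg h2]
        intro hc
        have : x = z := congrArg Subtype.val (Sum.inr.inj hc)
        rw [this]
    · intro q
      match q with
      | Sum.inl qq =>
        induction qq using Quotient.ind with | _ e =>
        refine ⟨⟦ι e⟧, ?_⟩
        simp only [hF, Quotient.lift_mk]
        rw [dif_pos ⟨e, rfl⟩]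
        congr 1
        apply Quotient.sound
        have hee : ∃ e', ι e' = ι e := ⟨e, rfl⟩
        have h3 : ι (Classical.choose hee) = ι e := Classical.choose_spec hee
        rw [hι h3]
      | Sum.inr x =>
        refine ⟨⟦x.val⟧, ?_⟩
        simp only [hF, Quotient.lift_mk]
        rw [dif_neg (fun hc => hc.elim (fun e he => x.prop e he))]
  haveI : Finite (Quotient (SameCycle.setoid ψ)) := Quotient.finite _
  have := Nat.card_eq_of_bijective F hbij
  rw [cyc, cyc, this, Nat.card_sum]

end extend

section six
variable [Finite α] [DecidableEq α]

lemma cyc_six (ψ0 : Perm α) (a b a' b' X Y : α)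
    (hab : a ≠ b) (haa' : a ≠ a') (hab' : a ≠ b') (haX : a ≠ X) (haY : a ≠ Y)
    (hba' : b ≠ a') (hbb' : b ≠ b') (hbX : b ≠ X) (hbY : b ≠ Y)
    (ha'b' : a' ≠ b') (ha'X : a' ≠ X) (ha'Y : a' ≠ Y)
    (hb'X : b' ≠ X) (hb'Y : b' ≠ Y) (hXY : X ≠ Y)
    (hfa : ψ0 a = a) (hfb : ψ0 b = b) (hfa' : ψ0 a' = a') (hfb' : ψ0 b' = b') :
    ∃ k, cyc ψ0 = k + 4 ∧
      (cyc (Equiv.swap X a' * (Equiv.swap a' b * (Equiv.swap b Y * (Equiv.swap Y b' *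
          (Equiv.swap b' a * ψ0))))) = k + 1 ∨
        k = cyc (Equiv.swap X a' * (Equiv.swap a' b * (Equiv.swap b Y * (Equiv.swap Y b' *
          (Equiv.swap b' a * ψ0))))) + 1) ∧
      (ψ0 X = Y → cyc (Equiv.swap X a' * (Equiv.swap a' b * (Equiv.swap b Y * (Equiv.swap Y b' *
          (Equiv.swap b' a * ψ0))))) = k + 1) := by
  set ψ1 := Equiv.swap b' a * ψ0 with hd1
  set ψ2 := Equiv.swap Y b' * ψ1 with hd2
  set ψ3 := Equiv.swap b Y * ψ2 with hd3
  set ψ4 := Equiv.swap a' b * ψ3 with hd4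
  have hψ1b' : ψ1 b' = a := by
    simp only [hd1, Perm.mul_apply, hfb', Equiv.swap_apply_left]
  have hψ1a : ψ1 a = b' := by
    simp only [hd1, Perm.mul_apply, hfa, Equiv.swap_apply_right]
  have hψ1a' : ψ1 a' = a' := by
    simp only [hd1, Perm.mul_apply, hfa']
    exact Equiv.swap_apply_of_ne_of_ne ha'b' haa'.symm
  have hψ1b : ψ1 b = b := by
    simp only [hd1, Perm.mul_apply, hfb]
    exact Equiv.swap_apply_of_ne_of_ne hbb' hab.symm
  have hψ2b : ψ2 b = b := by
    simp only [hd2, Perm.mul_apply, hψ1b]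
    exact Equiv.swap_apply_of_ne_of_ne hbY hbb'
  have hψ2a' : ψ2 a' = a' := by
    simp only [hd2, Perm.mul_apply, hψ1a']
    exact Equiv.swap_apply_of_ne_of_ne ha'Y ha'b'
  have hψ3a' : ψ3 a' = a' := by
    simp only [hd3, Perm.mul_apply, hψ2a']
    exact Equiv.swap_apply_of_ne_of_ne hba'.symm ha'Y
  have m1 : ¬ ψ0.SameCycle b' a := fun hc => hab' (hc.eq_of_left hfb').symm
  have c1 : cyc ψ0 = cyc ψ1 + 1 := cyc_swap_mul_of_not_sameCycle (Ne.symm hab') m1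
  have m2 : ¬ ψ1.SameCycle Y b' := by
    intro hc
    have claim : ∀ n : ℕ, (ψ1 ^ n) b' = b' ∨ (ψ1 ^ n) b' = a := by
      intro n
      induction n with
      | zero => left; simp
      | succ n ih =>
        rw [pow_succ_apply]
        rcases ih with ih | ih <;> rw [ih]
        · right; exact hψ1b'
        · left; exact hψ1a
    obtain ⟨n, hn⟩ := sameCycle_iff_pow.mp hc.symm
    rcases claim n with hcl | hcl <;> rw [hn] at hcl
    · exact hb'Y hcl.symm
    · exact haY hcl.symm
  have c2 : cyc ψ1 = cyc ψ2 + 1 := cyc_swap_mul_of_not_sameCycle (fun hc => hb'Y hc.symm) m2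
  have m3 : ¬ ψ2.SameCycle b Y := fun hc => hbY (hc.eq_of_left hψ2b)
  have c3 : cyc ψ2 = cyc ψ3 + 1 := cyc_swap_mul_of_not_sameCycle hbY m3
  have m4 : ¬ ψ3.SameCycle a' b := fun hc => hba' (hc.eq_of_left hψ3a').symm
  have c4 : cyc ψ3 = cyc ψ4 + 1 := cyc_swap_mul_of_not_sameCycle (Ne.symm hba') m4
  refine ⟨cyc ψ4, by omega, ?_, ?_⟩
  · by_cases hs : ψ4.SameCycle X a'
    · left; exact cyc_swap_mul_of_sameCycle (fun hc => ha'X hc.symm) hs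
    · right; exact cyc_swap_mul_of_not_sameCycle (fun hc => ha'X hc.symm) hs
  · intro h0
    have hψ1X : ψ1 X = Y := by
      simp only [hd1, Perm.mul_apply, h0]
      exact Equiv.swap_apply_of_ne_of_ne (Ne.symm hb'Y) (Ne.symm haY)
    have hψ2X : ψ2 X = b' := by
      simp only [hd2, Perm.mul_apply, hψ1X, Equiv.swap_apply_left]
    have hψ3X : ψ3 X = b' := by
      simp only [hd3, Perm.mul_apply, hψ2X]
      exact Equiv.swap_apply_of_ne_of_ne hbb'.symm hb'Y
    have hψ4X : ψ4 X = b' := by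
      simp only [hd4, Perm.mul_apply, hψ3X]
      exact Equiv.swap_apply_of_ne_of_ne (Ne.symm ha'b') (Ne.symm hbb')
    have hψ2b' : ψ2 b' = a := by
      simp only [hd2, Perm.mul_apply, hψ1b']
      exact Equiv.swap_apply_of_ne_of_ne haY hab'
    have hψ3b' : ψ3 b' = a := by
      simp only [hd3, Perm.mul_apply, hψ2b']
      exact Equiv.swap_apply_of_ne_of_ne hab haY
    have hψ4b' : ψ4 b' = a := by
      simp only [hd4, Perm.mul_apply, hψ3b']
      exact Equiv.swap_apply_of_ne_of_ne haa' hab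
    have hψ2a : ψ2 a = Y := by
      simp only [hd2, Perm.mul_apply, hψ1a, Equiv.swap_apply_right]
    have hψ3a : ψ3 a = b := by
      simp only [hd3, Perm.mul_apply, hψ2a, Equiv.swap_apply_right]
    have hψ4a : ψ4 a = a' := by
      simp only [hd4, Perm.mul_apply, hψ3a, Equiv.swap_apply_right]
    have hs : ψ4.SameCycle X a' := by
      apply sameCycle_of_pow 3
      have : (3 : ℕ) = 2 + 1 := rfl
      rw [this, pow_succ_apply]
      have : (2 : ℕ) = 1 + 1 := rfl
      rw [this, pow_succ_apply, pow_one, hψ4X, hψ4b', hψ4a]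
    exact cyc_swap_mul_of_sameCycle (fun hc => ha'X hc.symm) hs

end six

section trans
variable {σ : Perm α} {σ' : Perm β} {ι : β → α}

/-- Deleting fixed "skipped" points from orbits preserves reachability. -/
lemma skip_trans (hι : Function.Injective ι) (P : α → Prop)
    (hP : ∀ x : α, P x ↔ ∃ e, ι e = x)
    (Hyp : ∀ e : β, (P (σ (ι e)) ∧ ι (σ' e) = σ (ι e)) ∨
      (¬ P (σ (ι e)) ∧ ι (σ' e) = σ (σ (ι e))))
    (e e' : β) (h : ∃ n : ℕ, (σ ^ n) (ι e) = ι e') :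
    ∃ m : ℕ, (σ' ^ m) e = e' := by
  obtain ⟨n, hn⟩ := h
  have aux : ∀ k : ℕ, (∃ m, ι ((σ' ^ m) e) = (σ ^ k) (ι e)) ∨
      (¬ P ((σ ^ k) (ι e)) ∧ ∃ m, ι ((σ' ^ m) e) = (σ ^ (k+1)) (ι e)) := by
    intro k
    induction k with
    | zero => left; exact ⟨0, rfl⟩
    | succ k ih =>
      rcases ih with ⟨m, hm⟩ | ⟨hnp, m, hm⟩
      · rcases Hyp ((σ' ^ m) e) with ⟨hp, he⟩ | ⟨hnp, he⟩
        · left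
          exact ⟨m+1, by rw [pow_succ_apply, he, hm, ← pow_succ_apply]⟩
        · right
          refine ⟨by rw [pow_succ_apply, ← hm]; exact hnp, m+1, ?_⟩
          rw [pow_succ_apply (π := σ'), he, hm, ← pow_succ_apply, ← pow_succ_apply]
      · left; exact ⟨m, hm⟩
  rcases aux n with ⟨m, hm⟩ | ⟨hnp, _⟩
  · exact ⟨m, hι (by rw [hm, hn])⟩
  · rw [hn] at hnp
    exact absurd ((hP (ι e')).mpr ⟨e', rfl⟩) hnp

/-- Reachability in a sub-permutation lifts along one-or-two-step simulation. -/
lemma ins_reach (Hyp : ∀ e : β, ι (σ' e) = σ (ι e) ∨ ι (σ' e) = σ (σ (ι e)))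
    (e e' : β) (h : ∃ m : ℕ, (σ' ^ m) e = e') : ∃ n : ℕ, (σ ^ n) (ι e) = ι e' := by
  obtain ⟨m, rfl⟩ := h
  induction m with
  | zero => exact ⟨0, rfl⟩
  | succ m ih =>
    obtain ⟨n, hn⟩ := ih
    rw [pow_succ_apply]
    rcases Hyp ((σ' ^ m) e) with he | he
    · exact ⟨n+1, by rw [pow_succ_apply, hn, ← he]⟩
    · exact ⟨n+2, by rw [pow_succ_apply, pow_succ_apply, hn, ← he]⟩

end trans

section rot
open SimpleGraph

lemma permCongr_pow {e : α ≃ β} (f : Perm α) (n : ℕ) :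
    (e.permCongr f) ^ n = e.permCongr (f ^ n) := by
  induction n with
  | zero =>
    ext x
    simp [Equiv.permCongr_apply]
  | succ n ih =>
    ext x
    simp only [pow_succ, Perm.mul_apply, ih, Equiv.permCongr_apply]
    simp

open Fin.NatCast in
lemma finRotate_trans {n : ℕ} (i j : Fin n) : ∃ k : ℕ, ((finRotate n) ^ k) i = j := by
  rcases n with _ | m
  · exact i.elim0
  · have key : ∀ k : ℕ, ((finRotate (m+1)) ^ k) i = i + (k : Fin (m+1)) := by
      intro k
      induction k with
      | zero => simp
      | succ k ih =>
        rw [pow_succ_apply, ih, finRotate_succ_apply]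
        rw [Nat.cast_add, Nat.cast_one, add_assoc]
    refine ⟨(j - i).val, ?_⟩
    rw [key, Fin.cast_val_eq_self, add_sub_cancel]

/-- Every finite graph admits a rotation system. -/
lemma exists_rotationSystem {W : Type*} (H : SimpleGraph W) [Fintype W] [DecidableRel H.Adj] :
    ∃ σ : Perm H.Dart, Genus.IsRotationSystem H σ := by
  classical
  set E : (Σ x : W, {d : H.Dart // d.fst = x}) ≃ H.Dart :=
    Equiv.sigmaFiberEquiv (fun d : H.Dart => d.fst) with hE
  set ρ : ∀ x : W, Perm {d : H.Dart // d.fst = x} := fun x =>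
    ((Fintype.equivFin {d : H.Dart // d.fst = x}).symm).permCongr
      (finRotate (Fintype.card {d : H.Dart // d.fst = x})) with hρ
  set σ : Perm H.Dart := E.permCongr (Equiv.sigmaCongrRight ρ) with hσ
  have happ : ∀ (x : W) (s : {d : H.Dart // d.fst = x}), σ s.val = (ρ x s).val := by
    rintro x ⟨d, hd⟩
    subst hd
    rfl
  have hpow : ∀ (x : W) (s : {d : H.Dart // d.fst = x}) (n : ℕ),
      (σ ^ n) s.val = ((ρ x ^ n) s).val := by
    intro x s n
    induction n with
    | zero => rfl
    | succ n ih => rw [pow_succ_apply, ih, happ x ((ρ x ^ n) s), ← pow_succ_apply]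
  refine ⟨σ, ?_, ?_⟩
  · intro d
    have := (ρ d.fst ⟨d, rfl⟩).prop
    rw [happ d.fst ⟨d, rfl⟩, this]
  · intro d d' hfst
    have hr : ∃ k : ℕ, (ρ d.fst ^ k) ⟨d, rfl⟩ = ⟨d', hfst.symm⟩ := by
      rw [hρ]
      obtain ⟨k, hk⟩ := finRotate_trans
        ((Fintype.equivFin {x : H.Dart // x.fst = d.fst}) ⟨d, rfl⟩)
        ((Fintype.equivFin {x : H.Dart // x.fst = d.fst}) ⟨d', hfst.symm⟩)
      refine ⟨k, ?_⟩
      rw [permCongr_pow, Equiv.permCongr_apply]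
      simp only [Equiv.symm_symm, Equiv.symm_apply_apply]
      rw [hk]
      exact Equiv.symm_apply_apply _ _
    obtain ⟨k, hk⟩ := hr
    exact ⟨k, by rw [hpow d.fst ⟨d, rfl⟩ k, hk]⟩

end rot

section graph
open SimpleGraph Genus

variable {V : Type*} [DecidableEq V] {G : SimpleGraph V} {v u w : V}

/-- The graph obtained by deleting the vertex `v`. -/
abbrev Gd (G : SimpleGraph V) (v : V) : SimpleGraph {x : V // x ≠ v} := G.comap Subtype.val

instance decGd [DecidableRel G.Adj] : DecidableRel (Gd G v).Adj :=
  fun a b => (inferInstance : Decidable (G.Adj a.val b.val))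

/-- Map darts of `G − v` to darts of `G`. -/
def dmap (d : (Gd G v).Dart) : G.Dart := ⟨(d.fst.val, d.snd.val), d.adj⟩

lemma dmap_injective : Function.Injective (dmap (G := G) (v := v)) := by
  rintro ⟨⟨⟨x1, hx1⟩, ⟨y1, hy1⟩⟩, h1⟩ ⟨⟨⟨x2, hx2⟩, ⟨y2, hy2⟩⟩, h2⟩ h
  rw [Dart.ext_iff] at h ⊢
  simp only [dmap] at h
  simp only [Prod.ext_iff] at h ⊢
  exact ⟨Subtype.ext h.1, Subtype.ext h.2⟩

lemma dmap_symm (d : (Gd G v).Dart) : dmap d.symm = (dmap d).symm := rfl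

lemma dmap_fst (d : (Gd G v).Dart) : (dmap d).fst = d.fst.val := rfl

/-- The darts of `G` avoiding `v`. -/
def Pd (v : V) (d : G.Dart) : Prop := d.fst ≠ v ∧ d.snd ≠ v

instance : DecidablePred (Pd v (G := G)) := fun _ => instDecidableAnd

/-- Inverse of `dmap` on darts avoiding `v`. -/
def pdInv (d : G.Dart) (h : Pd v d) : (Gd G v).Dart := ⟨(⟨d.fst, h.1⟩, ⟨d.snd, h.2⟩), d.adj⟩

lemma dmap_pdInv (d : G.Dart) (h : Pd v d) : dmap (pdInv d h) = d := by
  apply Dart.ext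
  rfl

lemma pdInv_dmap (e : (Gd G v).Dart) (h : Pd v (dmap e)) : pdInv (dmap e) h = e :=
  dmap_injective (dmap_pdInv _ _)

lemma Pd_dmap (e : (Gd G v).Dart) : Pd v (dmap e) := ⟨e.fst.prop, e.snd.prop⟩

lemma Pd_range (d : G.Dart) : Pd v d ↔ ∃ e : (Gd G v).Dart, dmap e = d := by
  constructor
  · intro h; exact ⟨pdInv d h, dmap_pdInv d h⟩
  · rintro ⟨e, rfl⟩; exact Pd_dmap e

lemma Pd_symm {d : G.Dart} (h : Pd v d) : Pd v d.symm := ⟨h.2, h.1⟩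

section deg
variable [Fintype V] [DecidableRel G.Adj]

lemma neighbor_eq (hdeg : G.degree v = 2) (hvu : G.Adj v u) (hvw : G.Adj v w)
    (huw : u ≠ w) {z : V} (hz : G.Adj v z) : z = u ∨ z = w := by
  have hsub : ({u, w} : Finset V) ⊆ G.neighborFinset v := by
    intro z hzz
    rw [Finset.mem_insert, Finset.mem_singleton] at hzz
    rcases hzz with rfl | rfl <;> rw [mem_neighborFinset] <;> assumption
  have hcard : ({u, w} : Finset V).card = 2 := by
    rw [Finset.card_insert_of_notMem (by simpa using huw), Finset.card_singleton]
  have heq : ({u, w} : Finset V) = G.neighborFinset v := by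
    apply Finset.eq_of_subset_of_card_le hsub
    rw [hcard]
    have : (G.neighborFinset v).card = G.degree v := rfl
    omega
  have : z ∈ G.neighborFinset v := (mem_neighborFinset G v z).mpr hz
  rw [← heq, Finset.mem_insert, Finset.mem_singleton] at this
  exact this

lemma dart_at_v (hdeg : G.degree v = 2) (hvu : G.Adj v u) (hvw : G.Adj v w)
    (huw : u ≠ w) (d : G.Dart) (h : d.fst = v) :
    d = ⟨(v, u), hvu⟩ ∨ d = ⟨(v, w), hvw⟩ := by
  have hadj : G.Adj v d.snd := h ▸ d.adj
  rcases neighbor_eq hdeg hvu hvw huw hadj with h2 | h2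
  · left; apply Dart.ext; rw [Prod.ext_iff]; exact ⟨h, h2⟩
  · right; apply Dart.ext; rw [Prod.ext_iff]; exact ⟨h, h2⟩

lemma dart_cases (hdeg : G.degree v = 2) (hvu : G.Adj v u) (hvw : G.Adj v w)
    (huw : u ≠ w) (d : G.Dart) (h : ¬ Pd v d) :
    d = ⟨(v, u), hvu⟩ ∨ d = ⟨(v, w), hvw⟩ ∨ d = ⟨(u, v), hvu.symm⟩ ∨ d = ⟨(w, v), hvw.symm⟩ := by
  rw [Pd, not_and_or, not_ne_iff, not_ne_iff] at h
  rcases h with h | h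
  · rcases dart_at_v hdeg hvu hvw huw d h with h2 | h2
    · exact Or.inl h2
    · exact Or.inr (Or.inl h2)
  · have hadj : G.Adj v d.fst := (h ▸ d.adj).symm
    rcases neighbor_eq hdeg hvu hvw huw hadj with h2 | h2
    · refine Or.inr (Or.inr (Or.inl ?_))
      apply Dart.ext; rw [Prod.ext_iff]; exact ⟨h2, h⟩
    · refine Or.inr (Or.inr (Or.inr ?_))
      apply Dart.ext; rw [Prod.ext_iff]; exact ⟨h2, h⟩

end deg
end graph

section counts
open SimpleGraph Genus

variable {V : Type*} [DecidableEq V] {G : SimpleGraph V} {v u w : V}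

lemma dart_ne_of_fst {d1 d2 : G.Dart} (h : d1.fst ≠ d2.fst) : d1 ≠ d2 :=
  fun hc => h (by rw [hc])

lemma dart_ne_of_snd {d1 d2 : G.Dart} (h : d1.snd ≠ d2.snd) : d1 ≠ d2 :=
  fun hc => h (by rw [hc])

lemma numFaces_eq_cyc {W : Type*} (H : SimpleGraph W) (σ : Equiv.Perm H.Dart) :
    Genus.numFaces H σ = cyc (Genus.facePerm H σ) := rfl

/-- The darts avoiding `v`, as darts of `G − v`. -/
def equivPdDart : {d : G.Dart // Pd v d} ≃ (Gd G v).Dart where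
  toFun s := pdInv s.val s.prop
  invFun e := ⟨dmap e, Pd_dmap e⟩
  left_inv s := Subtype.ext (dmap_pdInv s.val s.prop)
  right_inv e := pdInv_dmap e (Pd_dmap e)

variable [Fintype V] [DecidableRel G.Adj]

lemma card_notPd (hdeg : G.degree v = 2) (hvu : G.Adj v u) (hvw : G.Adj v w)
    (huw : u ≠ w) : Nat.card {d : G.Dart // ¬ Pd v d} = 4 := by
  have hvu' : v ≠ u := hvu.ne
  have hvw' : v ≠ w := hvw.ne
  set da : G.Dart := ⟨(v, u), hvu⟩ with hda
  set db : G.Dart := ⟨(v, w), hvw⟩ with hdb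
  set da' : G.Dart := ⟨(u, v), hvu.symm⟩ with hda'
  set db' : G.Dart := ⟨(w, v), hvw.symm⟩ with hdb'
  have h1 : da ≠ db := dart_ne_of_snd huw
  have h2 : da ≠ da' := dart_ne_of_fst hvu'
  have h3 : da ≠ db' := dart_ne_of_fst hvw'
  have h4 : db ≠ da' := dart_ne_of_fst hvu'
  have h5 : db ≠ db' := dart_ne_of_fst hvw'
  have h6 : da' ≠ db' := dart_ne_of_fst huw
  have hset : {d : G.Dart | ¬ Pd v d} = {da, db, da', db'} := by
    ext d
    simp only [Set.mem_setOf_eq, Set.mem_insert_iff, Set.mem_singleton_iff]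
    constructor
    · intro h
      exact dart_cases hdeg hvu hvw huw d h
    · rintro (rfl | rfl | rfl | rfl) <;> rw [Pd, not_and_or, not_ne_iff, not_ne_iff]
      · left; rfl
      · left; rfl
      · right; rfl
      · right; rfl
  calc Nat.card {d : G.Dart // ¬ Pd v d} = ({da, db, da', db'} : Set G.Dart).ncard := by
        rw [← hset]
        exact Nat.card_coe_set_eq _
    _ = 4 := by
        rw [Set.ncard_insert_of_notMem (by simp [h1, h2, h3]),
          Set.ncard_insert_of_notMem (by simp [h4, h5]),
          Set.ncard_insert_of_notMem (by simp [h6]), Set.ncard_singleton]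

lemma card_dart_split (hdeg : G.degree v = 2) (hvu : G.Adj v u) (hvw : G.Adj v w)
    (huw : u ≠ w) : Nat.card G.Dart = Nat.card (Gd G v).Dart + 4 := by
  have e1 : {d : G.Dart // Pd v d} ⊕ {d : G.Dart // ¬ Pd v d} ≃ G.Dart :=
    Equiv.sumCompl _
  rw [← Nat.card_congr e1, Nat.card_sum, Nat.card_congr (equivPdDart (G := G) (v := v)),
    card_notPd hdeg hvu hvw huw]

lemma card_V' (hv : (v : V) = v) : Nat.card {x : V // x ≠ v} + 1 = Nat.card V := by
  have h1 : Nat.card {x : V // x ≠ v} = Fintype.card {x : V // ¬ x = v} := by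
    rw [Nat.card_eq_fintype_card]
  have h2 : Fintype.card {x : V // ¬ x = v} = Fintype.card V - Fintype.card {x : V // x = v} :=
    Fintype.card_subtype_compl _
  have h3 : Fintype.card {x : V // x = v} = 1 := Fintype.card_subtype_eq v
  have h4 : 0 < Fintype.card V := Fintype.card_pos_iff.mpr ⟨v⟩
  rw [Nat.card_eq_fintype_card (α := V), h1, h2, h3]
  omega

lemma card_E (hdeg : G.degree v = 2) (hvu : G.Adj v u) (hvw : G.Adj v w)
    (huw : u ≠ w) : Nat.card G.edgeSet = Nat.card (Gd G v).edgeSet + 2 := by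
  have hG : Nat.card G.Dart = 2 * Nat.card G.edgeSet := by
    rw [Nat.card_eq_fintype_card, Nat.card_eq_fintype_card, dart_card_eq_twice_card_edges,
      edgeFinset_card]
  have hG' : Nat.card (Gd G v).Dart = 2 * Nat.card (Gd G v).edgeSet := by
    rw [Nat.card_eq_fintype_card, Nat.card_eq_fintype_card, dart_card_eq_twice_card_edges,
      edgeFinset_card]
  have := card_dart_split hdeg hvu hvw huw
  omega

end counts

section del
open SimpleGraph Genus

variable {V : Type*} [DecidableEq V] [Fintype V] {G : SimpleGraph V} [DecidableRel G.Adj]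
  {v u w : V}

lemma deletion (hdeg : G.degree v = 2) (hvu : G.Adj v u) (hvw : G.Adj v w)
    (huw : u ≠ w) (hadj : G.Adj u w) (σ : Equiv.Perm G.Dart)
    (hσ : Genus.IsRotationSystem G σ) :
    ∃ σ' : Equiv.Perm (Gd G v).Dart, Genus.IsRotationSystem (Gd G v) σ' ∧
      Genus.numFaces G σ ≤ Genus.numFaces (Gd G v) σ' + 1 := by
  classical
  have hvu' : v ≠ u := hvu.ne
  have hvw' : v ≠ w := hvw.ne
  set da : G.Dart := ⟨(v, u), hvu⟩ with hda
  set db : G.Dart := ⟨(v, w), hvw⟩ with hdb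
  set da' : G.Dart := ⟨(u, v), hvu.symm⟩ with hda'
  set db' : G.Dart := ⟨(w, v), hvw.symm⟩ with hdb'
  set t : G.Dart := ⟨(u, w), hadj⟩ with hdt
  set t2 : G.Dart := ⟨(w, u), hadj.symm⟩ with hdt2
  have hfst : ∀ d, (σ d).fst = d.fst := hσ.1
  have hsymm_a : da.symm = da' := by apply Dart.ext; rfl
  have hsymm_b : db.symm = db' := by apply Dart.ext; rfl
  have hsymm_a' : da'.symm = da := by apply Dart.ext; rfl
  have hsymm_b' : db'.symm = db := by apply Dart.ext; rfl
  -- σ exchanges the two darts at v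
  have hσa : σ da = db := by
    rcases dart_at_v hdeg hvu hvw huw (σ da) (by rw [hfst]) with h | h
    · exfalso
      have hall : ∀ n, (σ ^ n) da = da := by
        intro n
        induction n with
        | zero => rfl
        | succ n ih => rw [pow_succ_apply, ih, h]
      obtain ⟨n, hn⟩ := hσ.2 da db rfl
      rw [hall n] at hn
      exact dart_ne_of_snd (show da.snd ≠ db.snd from huw) hn
    · exact h
  have hσb : σ db = da := by
    rcases dart_at_v hdeg hvu hvw huw (σ db) (by rw [hfst]) with h | h
    · exact h
    · exfalso
      have hall : ∀ n, (σ ^ n) db = db := by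
        intro n
        induction n with
        | zero => rfl
        | succ n ih => rw [pow_succ_apply, ih, h]
      obtain ⟨n, hn⟩ := hσ.2 db da rfl
      rw [hall n] at hn
      exact dart_ne_of_snd (show db.snd ≠ da.snd from (Ne.symm huw)) hn
  -- σ moves the darts pointing at v
  have hna' : σ da' ≠ da' := by
    intro hc
    have hall : ∀ n, (σ ^ n) da' = da' := by
      intro n
      induction n with
      | zero => rfl
      | succ n ih => rw [pow_succ_apply, ih, hc]
    obtain ⟨n, hn⟩ := hσ.2 da' t rfl
    rw [hall n] at hn
    exact dart_ne_of_snd (show da'.snd ≠ t.snd from hvw') hn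
  have hnb' : σ db' ≠ db' := by
    intro hc
    have hall : ∀ n, (σ ^ n) db' = db' := by
      intro n
      induction n with
      | zero => rfl
      | succ n ih => rw [pow_succ_apply, ih, hc]
    obtain ⟨n, hn⟩ := hσ.2 db' t2 rfl
    rw [hall n] at hn
    exact dart_ne_of_snd (show db'.snd ≠ t2.snd from hvu') hn
  set r : G.Dart := σ da' with hdr
  set s : G.Dart := σ db' with hds
  have hrfst : r.fst = u := hfst da'
  have hsfst : s.fst = w := hfst db'
  have hPr : Pd v r := by
    refine ⟨by rw [hrfst]; exact hvu.ne', ?_⟩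
    intro hc
    rcases dart_at_v hdeg hvu hvw huw r.symm hc with h | h
    · have h2 := congrArg Dart.symm h
      rw [Dart.symm_symm] at h2
      have h3 : r = da' := by rw [h2]; exact Dart.ext _ _ rfl
      exact hna' h3
    · have h2 := congrArg Dart.symm h
      rw [Dart.symm_symm] at h2
      have h3 : r = db' := by rw [h2]; exact Dart.ext _ _ rfl
      apply huw
      rw [← hrfst, h3]
  have hPs : Pd v s := by
    refine ⟨by rw [hsfst]; exact hvw.ne', ?_⟩
    intro hc
    rcases dart_at_v hdeg hvu hvw huw s.symm hc with h | h
    · have h2 := congrArg Dart.symm h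
      rw [Dart.symm_symm] at h2
      have h3 : s = da' := by rw [h2]; exact Dart.ext _ _ rfl
      apply huw
      rw [← hsfst, h3]
    · have h2 := congrArg Dart.symm h
      rw [Dart.symm_symm] at h2
      have h3 : s = db' := by rw [h2]; exact Dart.ext _ _ rfl
      exact hnb' h3
  -- basic distinctness
  have hnadab : da ≠ db := dart_ne_of_snd huw
  have hnada' : da ≠ da' := dart_ne_of_fst hvu'
  have hnadb' : da ≠ db' := dart_ne_of_fst hvw'
  have hnbda' : db ≠ da' := dart_ne_of_fst hvu'
  have hnbdb' : db ≠ db' := dart_ne_of_fst hvw'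
  have hna'b' : da' ≠ db' := dart_ne_of_fst huw
  have hnra : da ≠ r := dart_ne_of_fst (by rw [hrfst]; exact hvu')
  have hnsa : da ≠ s := dart_ne_of_fst (by rw [hsfst]; exact hvw')
  have hnrb : db ≠ r := dart_ne_of_fst (by rw [hrfst]; exact hvu')
  have hnsb : db ≠ s := dart_ne_of_fst (by rw [hsfst]; exact hvw')
  have hnra' : da' ≠ r := fun hc => hna' hc.symm
  have hnsa' : da' ≠ s := dart_ne_of_fst (by rw [hsfst]; exact huw)
  have hnrb' : db' ≠ r := dart_ne_of_fst (by rw [hrfst]; exact huw.symm)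
  have hnsb' : db' ≠ s := fun hc => hnb' hc.symm
  have hnrs : r ≠ s := dart_ne_of_fst (by rw [hrfst, hsfst]; exact huw)
  -- the deleted rotation system
  have hstep : ∀ e : (Gd G v).Dart, ¬ Pd v (σ (dmap e)) → Pd v (σ (σ (dmap e))) := by
    intro e hnp
    have hf : (σ (dmap e)).fst ≠ v := by rw [hfst]; exact (Pd_dmap e).1
    rcases dart_cases hdeg hvu hvw huw _ hnp with h | h | h | h
    · exact absurd (by rw [h] : (σ (dmap e)).fst = v) hf
    · exact absurd (by rw [h] : (σ (dmap e)).fst = v) hf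
    · rw [h]; exact hPr
    · rw [h]; exact hPs
  set σf : (Gd G v).Dart → (Gd G v).Dart := fun e =>
    if h : Pd v (σ (dmap e)) then pdInv _ h else pdInv _ (hstep e h) with hσf
  have hσf_inj : Function.Injective σf := by
    intro e1 e2 hc
    rw [hσf] at hc
    dsimp only at hc
    by_cases h1 : Pd v (σ (dmap e1)) <;> by_cases h2 : Pd v (σ (dmap e2))
    · rw [dif_pos h1, dif_pos h2] at hc
      have h3 := congrArg dmap hc
      rw [dmap_pdInv, dmap_pdInv] at h3
      exact dmap_injective (σ.injective h3)
    · rw [dif_pos h1, dif_neg h2] at hc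
      have h3 := congrArg dmap hc
      rw [dmap_pdInv, dmap_pdInv] at h3
      have h4 := σ.injective h3
      exact absurd (h4 ▸ Pd_dmap e1) h2
    · rw [dif_neg h1, dif_pos h2] at hc
      have h3 := congrArg dmap hc
      rw [dmap_pdInv, dmap_pdInv] at h3
      have h4 := σ.injective h3.symm
      exact absurd (h4 ▸ Pd_dmap e2) h1
    · rw [dif_neg h1, dif_neg h2] at hc
      have h3 := congrArg dmap hc
      rw [dmap_pdInv, dmap_pdInv] at h3
      exact dmap_injective (σ.injective (σ.injective h3))
  set σ' : Equiv.Perm (Gd G v).Dart :=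
    Equiv.ofBijective σf (Finite.injective_iff_bijective.mp hσf_inj) with hσ'
  have hσ'1 : ∀ e, Pd v (σ (dmap e)) → dmap (σ' e) = σ (dmap e) := by
    intro e h
    show dmap (σf e) = _
    rw [hσf]
    dsimp only
    rw [dif_pos h, dmap_pdInv]
  have hσ'2 : ∀ e, ¬ Pd v (σ (dmap e)) → dmap (σ' e) = σ (σ (dmap e)) := by
    intro e h
    show dmap (σf e) = _
    rw [hσf]
    dsimp only
    rw [dif_neg h, dmap_pdInv]
  have hrot' : Genus.IsRotationSystem (Gd G v) σ' := by
    constructor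
    · intro e
      have hval : (dmap (σ' e)).fst = (dmap e).fst := by
        by_cases h : Pd v (σ (dmap e))
        · rw [hσ'1 e h, hfst]
        · rw [hσ'2 e h, hfst, hfst]
      exact Subtype.ext hval
    · intro e e' hfeq
      refine skip_trans dmap_injective (Pd v) Pd_range ?_ e e'
        (hσ.2 (dmap e) (dmap e') (congrArg Subtype.val hfeq))
      intro e0
      by_cases h : Pd v (σ (dmap e0))
      · exact Or.inl ⟨h, hσ'1 e0 h⟩
      · exact Or.inr ⟨h, hσ'2 e0 h⟩
  -- the face permutation of the deleted graph, extended by fixed points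
  set φ' : Equiv.Perm (Gd G v).Dart := Genus.facePerm (Gd G v) σ' with hφ'
  set ψf : G.Dart → G.Dart := fun d => if h : Pd v d then dmap (φ' (pdInv d h)) else d with hψf
  have hψf_inj : Function.Injective ψf := by
    intro d1 d2 hc
    rw [hψf] at hc
    dsimp only at hc
    by_cases h1 : Pd v d1 <;> by_cases h2 : Pd v d2
    · rw [dif_pos h1, dif_pos h2] at hc
      have h3 := φ'.injective (dmap_injective hc)
      have h4 := congrArg dmap h3
      rwa [dmap_pdInv, dmap_pdInv] at h4
    · rw [dif_pos h1, dif_neg h2] at hc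
      exact absurd (hc ▸ Pd_dmap (φ' (pdInv d1 h1))) h2
    · rw [dif_neg h1, dif_pos h2] at hc
      exact absurd (hc ▸ Pd_dmap (φ' (pdInv d2 h2))) h1
    · rwa [dif_neg h1, dif_neg h2] at hc
  set ψ0 : Equiv.Perm G.Dart :=
    Equiv.ofBijective ψf (Finite.injective_iff_bijective.mp hψf_inj) with hψ0
  have hψ0app : ∀ d, ψ0 d = ψf d := fun d => rfl
  have hψ0comm : ∀ e, ψ0 (dmap e) = dmap (φ' e) := by
    intro e
    rw [hψ0app, hψf]
    dsimp only
    rw [dif_pos (Pd_dmap e), pdInv_dmap]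
  have hψ0fix : ∀ d, ¬ Pd v d → ψ0 d = d := by
    intro d h
    rw [hψ0app, hψf]
    dsimp only
    rw [dif_neg h]
  have hcyc0 : cyc ψ0 = cyc φ' + 4 := by
    have hext := cyc_extend dmap_injective φ' ψ0 hψ0comm (fun x hx =>
      hψ0fix x (fun hP => by obtain ⟨e, he⟩ := (Pd_range x).mp hP; exact hx e he))
    rw [hext]
    congr 1
    calc Nat.card {x : G.Dart // ∀ e, dmap e ≠ x}
        = Nat.card {x : G.Dart // ¬ Pd v x} := Nat.card_congr (Equiv.subtypeEquivRight (fun x => by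
            rw [Pd_range]
            exact not_exists.symm))
      _ = 4 := card_notPd hdeg hvu hvw huw
  have hnPa : ¬ Pd v da := fun h => h.1 rfl
  have hnPb : ¬ Pd v db := fun h => h.1 rfl
  have hnPa' : ¬ Pd v da' := fun h => h.2 rfl
  have hnPb' : ¬ Pd v db' := fun h => h.2 rfl
  have hface : ∀ d : G.Dart, Genus.facePerm G σ d = σ d.symm := fun d => rfl
  have hkey : Genus.facePerm G σ = Equiv.swap r da' * (Equiv.swap da' db * (Equiv.swap db s *
      (Equiv.swap s db' * (Equiv.swap db' da * ψ0)))) := by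
    apply Equiv.ext
    intro d
    simp only [Perm.mul_apply]
    rw [hface]
    by_cases hPd : Pd v d
    · have hPds : Pd v d.symm := Pd_symm hPd
      have hψval : ψ0 d = dmap (σ' (pdInv d.symm hPds)) := by
        have h0 : ψ0 d = dmap (φ' (pdInv d hPd)) := by
          rw [hψ0app, hψf]
          dsimp only
          rw [dif_pos hPd]
        rw [h0, hφ']
        show dmap ((σ' * Genus.dartRev (Gd G v)) (pdInv d hPd)) = _
        rw [Perm.mul_apply]
        have hrev : Genus.dartRev (Gd G v) (pdInv d hPd) = pdInv d.symm hPds :=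
          Dart.ext _ _ rfl
        rw [hrev]
      by_cases hcc : Pd v (σ d.symm)
      · have h1 : ψ0 d = σ d.symm := by
          rw [hψval, hσ'1 (pdInv d.symm hPds) (by rwa [dmap_pdInv]), dmap_pdInv]
        have e1 : σ d.symm ≠ db' := fun hcc2 => hnPb' (hcc2 ▸ hcc)
        have e2 : σ d.symm ≠ da := fun hcc2 => hnPa (hcc2 ▸ hcc)
        have e3 : σ d.symm ≠ s := by
          intro hcc2
          have h4 := σ.injective (hcc2.trans hds)
          have h5 := congrArg Dart.symm h4
          rw [Dart.symm_symm, hsymm_b'] at h5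
          exact hnPb (h5 ▸ hPd)
        have e4 : σ d.symm ≠ db := fun hcc2 => hnPb (hcc2 ▸ hcc)
        have e5 : σ d.symm ≠ da' := fun hcc2 => hnPa' (hcc2 ▸ hcc)
        have e6 : σ d.symm ≠ r := by
          intro hcc2
          have h4 := σ.injective (hcc2.trans hdr)
          have h5 := congrArg Dart.symm h4
          rw [Dart.symm_symm, hsymm_a'] at h5
          exact hnPa (h5 ▸ hPd)
        rw [h1, Equiv.swap_apply_of_ne_of_ne e1 e2, Equiv.swap_apply_of_ne_of_ne e3 e1,
          Equiv.swap_apply_of_ne_of_ne e4 e3, Equiv.swap_apply_of_ne_of_ne e5 e4,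
          Equiv.swap_apply_of_ne_of_ne e6 e5]
      · have hf2 : (σ d.symm).fst ≠ v := by
          rw [hfst]
          exact hPd.2
        rcases dart_cases hdeg hvu hvw huw _ hcc with h | h | h | h
        · exact absurd (by rw [h] : (σ d.symm).fst = v) hf2
        · exact absurd (by rw [h] : (σ d.symm).fst = v) hf2
        · rw [← hda'] at h
          have h1 : ψ0 d = r := by
            rw [hψval, hσ'2 (pdInv d.symm hPds) (by rw [dmap_pdInv, h]; exact hnPa'),
              dmap_pdInv, h, ← hdr]
          rw [h, h1, Equiv.swap_apply_of_ne_of_ne (Ne.symm hnrb') (Ne.symm hnra),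
            Equiv.swap_apply_of_ne_of_ne hnrs (Ne.symm hnrb'),
            Equiv.swap_apply_of_ne_of_ne (Ne.symm hnrb) hnrs,
            Equiv.swap_apply_of_ne_of_ne (Ne.symm hnra') (Ne.symm hnrb),
            Equiv.swap_apply_left]
        · rw [← hdb'] at h
          have h1 : ψ0 d = s := by
            rw [hψval, hσ'2 (pdInv d.symm hPds) (by rw [dmap_pdInv, h]; exact hnPb'),
              dmap_pdInv, h, ← hds]
          rw [h, h1, Equiv.swap_apply_of_ne_of_ne (Ne.symm hnsb') (Ne.symm hnsa),
            Equiv.swap_apply_left,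
            Equiv.swap_apply_of_ne_of_ne (Ne.symm hnbdb') hnsb',
            Equiv.swap_apply_of_ne_of_ne (Ne.symm hna'b') (Ne.symm hnbdb'),
            Equiv.swap_apply_of_ne_of_ne hnrb' (Ne.symm hna'b')]
    · rcases dart_cases hdeg hvu hvw huw d hPd with h | h | h | h
      · rw [h, ← hda, hsymm_a, ← hdr, hψ0fix da hnPa, Equiv.swap_apply_right,
          Equiv.swap_apply_right, Equiv.swap_apply_right, Equiv.swap_apply_right,
          Equiv.swap_apply_right]
      · rw [h, ← hdb, hsymm_b, ← hds, hψ0fix db hnPb,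
          Equiv.swap_apply_of_ne_of_ne hnbdb' (Ne.symm hnadab),
          Equiv.swap_apply_of_ne_of_ne hnsb hnbdb',
          Equiv.swap_apply_left,
          Equiv.swap_apply_of_ne_of_ne (Ne.symm hnsa') (Ne.symm hnsb),
          Equiv.swap_apply_of_ne_of_ne (Ne.symm hnrs) (Ne.symm hnsa')]
      · rw [h, ← hda', hsymm_a', hσa, hψ0fix da' hnPa',
          Equiv.swap_apply_of_ne_of_ne hna'b' (Ne.symm hnada'),
          Equiv.swap_apply_of_ne_of_ne hnsa' hna'b',
          Equiv.swap_apply_of_ne_of_ne (Ne.symm hnbda') hnsa',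
          Equiv.swap_apply_left,
          Equiv.swap_apply_of_ne_of_ne hnrb hnbda']
      · rw [h, ← hdb', hsymm_b', hσb, hψ0fix db' hnPb',
          Equiv.swap_apply_left,
          Equiv.swap_apply_of_ne_of_ne hnsa hnadb',
          Equiv.swap_apply_of_ne_of_ne hnadab hnsa,
          Equiv.swap_apply_of_ne_of_ne hnada' hnadab,
          Equiv.swap_apply_of_ne_of_ne hnra hnada']
  obtain ⟨k, hk4, hdisj, _⟩ := cyc_six ψ0 da db da' db' r s
    hnadab hnada' hnadb' hnra hnsa hnbda' hnbdb' hnrb hnsb hna'b'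
    hnra' hnsa' hnrb' hnsb' hnrs
    (hψ0fix da hnPa) (hψ0fix db hnPb) (hψ0fix da' hnPa') (hψ0fix db' hnPb')
  refine ⟨σ', hrot', ?_⟩
  rw [numFaces_eq_cyc, numFaces_eq_cyc, ← hφ', hkey]
  rw [hcyc0] at hk4
  omega


lemma insertion (hdeg : G.degree v = 2) (hvu : G.Adj v u) (hvw : G.Adj v w)
    (huw : u ≠ w) (hadj : G.Adj u w) (σ' : Equiv.Perm (Gd G v).Dart)
    (hσ' : Genus.IsRotationSystem (Gd G v) σ') :
    ∃ σ : Equiv.Perm G.Dart, Genus.IsRotationSystem G σ ∧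
      Genus.numFaces G σ = Genus.numFaces (Gd G v) σ' + 1 := by
  classical
  have hvu' : v ≠ u := hvu.ne
  have hvw' : v ≠ w := hvw.ne
  set da : G.Dart := ⟨(v, u), hvu⟩ with hda
  set db : G.Dart := ⟨(v, w), hvw⟩ with hdb
  set da' : G.Dart := ⟨(u, v), hvu.symm⟩ with hda'
  set db' : G.Dart := ⟨(w, v), hvw.symm⟩ with hdb'
  set t : G.Dart := ⟨(u, w), hadj⟩ with hdt
  set t2 : G.Dart := ⟨(w, u), hadj.symm⟩ with hdt2
  have hsymm_a : da.symm = da' := by apply Dart.ext; rfl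
  have hsymm_b : db.symm = db' := by apply Dart.ext; rfl
  have hsymm_a' : da'.symm = da := by apply Dart.ext; rfl
  have hsymm_b' : db'.symm = db := by apply Dart.ext; rfl
  have hsymm_t : t.symm = t2 := by apply Dart.ext; rfl
  have hsymm_t2 : t2.symm = t := by apply Dart.ext; rfl
  have hnPa : ¬ Pd v da := fun h => h.1 rfl
  have hnPb : ¬ Pd v db := fun h => h.1 rfl
  have hnPa' : ¬ Pd v da' := fun h => h.2 rfl
  have hnPb' : ¬ Pd v db' := fun h => h.2 rfl
  have hPt : Pd v t := ⟨hvu.ne', hvw.ne'⟩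
  have hPt2 : Pd v t2 := ⟨hvw.ne', hvu.ne'⟩
  set t' : (Gd G v).Dart := pdInv t hPt with hdt'
  have ht'map : dmap t' = t := dmap_pdInv t hPt
  have ht'symm : dmap t'.symm = t2 := by rw [dmap_symm, ht'map, hsymm_t]
  have hfst' : ∀ e, (σ' e).fst = e.fst := hσ'.1
  have hfstinv' : ∀ e, (σ'⁻¹ e).fst = e.fst := by
    intro e
    rw [← hfst' (σ'⁻¹ e), Equiv.Perm.apply_inv_self]
  set x : G.Dart := dmap (σ'⁻¹ t') with hdx
  set s' : G.Dart := dmap (σ' t'.symm) with hds'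
  have hPx : Pd v x := Pd_dmap _
  have hPs' : Pd v s' := Pd_dmap _
  have hxfst : x.fst = u := by
    rw [hdx, dmap_fst, hfstinv']
    rfl
  have hs'fst : s'.fst = w := by
    rw [hds', dmap_fst, hfst']
    rfl
  -- distinctness
  have hnadab : da ≠ db := dart_ne_of_snd huw
  have hnada' : da ≠ da' := dart_ne_of_fst hvu'
  have hnadb' : da ≠ db' := dart_ne_of_fst hvw'
  have hnbda' : db ≠ da' := dart_ne_of_fst hvu'
  have hnbdb' : db ≠ db' := dart_ne_of_fst hvw'
  have hna'b' : da' ≠ db' := dart_ne_of_fst huw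
  have hta : t ≠ da := dart_ne_of_fst (Ne.symm hvu')
  have htb : t ≠ db := dart_ne_of_fst (Ne.symm hvu')
  have hta' : t ≠ da' := dart_ne_of_snd (Ne.symm hvw')
  have htb' : t ≠ db' := dart_ne_of_fst huw
  have htt2 : t ≠ t2 := dart_ne_of_fst huw
  have ht2a : t2 ≠ da := dart_ne_of_fst (Ne.symm hvw')
  have ht2b : t2 ≠ db := dart_ne_of_fst (Ne.symm hvw')
  have ht2a' : t2 ≠ da' := dart_ne_of_fst (Ne.symm huw)
  have ht2b' : t2 ≠ db' := dart_ne_of_snd (Ne.symm hvu')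
  have hs'a : s' ≠ da := dart_ne_of_fst (by rw [hs'fst]; exact Ne.symm hvw')
  have hs'b : s' ≠ db := dart_ne_of_fst (by rw [hs'fst]; exact Ne.symm hvw')
  have hs'a' : s' ≠ da' := dart_ne_of_fst (by rw [hs'fst]; exact Ne.symm huw)
  have hs'b' : s' ≠ db' := fun hc => hnPb' (hc ▸ hPs')
  have hs't : s' ≠ t := dart_ne_of_fst (by rw [hs'fst]; exact Ne.symm huw)
  have hxa : x ≠ da := dart_ne_of_fst (by rw [hxfst]; exact Ne.symm hvu')
  have hxb : x ≠ db := dart_ne_of_fst (by rw [hxfst]; exact Ne.symm hvu')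
  have hxa' : x ≠ da' := fun hc => hnPa' (hc ▸ hPx)
  have hxb' : x ≠ db' := dart_ne_of_fst (by rw [hxfst]; exact huw)
  have hxt2 : x ≠ t2 := dart_ne_of_fst (by rw [hxfst]; exact huw)
  -- the new permutation
  set σf : G.Dart → G.Dart := fun d =>
    if d = da then db else if d = db then da else if d = da' then t
    else if d = t2 then db' else if d = db' then s'
    else if d = x then da'
    else if h : Pd v d then dmap (σ' (pdInv d h)) else d with hσf
  set gf : G.Dart → G.Dart := fun d =>
    if d = db then da else if d = da then db else if d = t then da'
    else if d = db' then t2 else if d = s' then db'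
    else if d = da' then x
    else if h : Pd v d then dmap (σ'⁻¹ (pdInv d h)) else d with hgf
  -- evaluation lemmas
  have hσf_da : σf da = db := by
    rw [hσf]; dsimp only; rw [if_pos rfl]
  have hσf_db : σf db = da := by
    rw [hσf]; dsimp only; rw [if_neg (Ne.symm hnadab), if_pos rfl]
  have hσf_da' : σf da' = t := by
    rw [hσf]; dsimp only
    rw [if_neg (Ne.symm hnada'), if_neg (Ne.symm hnbda'), if_pos rfl]
  have hσf_t2 : σf t2 = db' := by
    rw [hσf]; dsimp only
    rw [if_neg ht2a, if_neg ht2b, if_neg ht2a', if_pos rfl]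
  have hσf_db' : σf db' = s' := by
    rw [hσf]; dsimp only
    rw [if_neg (Ne.symm hnadb'), if_neg (Ne.symm hnbdb'), if_neg (Ne.symm hna'b'),
      if_neg (Ne.symm ht2b'), if_pos rfl]
  have hσf_x : σf x = da' := by
    rw [hσf]; dsimp only
    rw [if_neg hxa, if_neg hxb, if_neg hxa', if_neg hxt2, if_neg hxb', if_pos rfl]
  have hσf_gen : ∀ e : (Gd G v).Dart, e ≠ σ'⁻¹ t' → e ≠ t'.symm →
      σf (dmap e) = dmap (σ' e) := by
    intro e h1 h2
    have hPde : Pd v (dmap e) := Pd_dmap e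
    have n1 : dmap e ≠ da := fun hc => hnPa (hc ▸ hPde)
    have n2 : dmap e ≠ db := fun hc => hnPb (hc ▸ hPde)
    have n3 : dmap e ≠ da' := fun hc => hnPa' (hc ▸ hPde)
    have n4 : dmap e ≠ t2 := fun hc => h2 (dmap_injective (hc.trans ht'symm.symm))
    have n5 : dmap e ≠ db' := fun hc => hnPb' (hc ▸ hPde)
    have n6 : dmap e ≠ x := fun hc => h1 (dmap_injective (hc.trans hdx))
    rw [hσf]; dsimp only
    rw [if_neg n1, if_neg n2, if_neg n3, if_neg n4, if_neg n5, if_neg n6,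
      dif_pos hPde, pdInv_dmap]
  have hgf_left : ∀ d, gf (σf d) = d := by
    have hgen : ∀ e : (Gd G v).Dart, e ≠ σ'⁻¹ t' → e ≠ t'.symm →
        gf (dmap (σ' e)) = dmap e := by
      intro e h1 h2
      have hPde : Pd v (dmap (σ' e)) := Pd_dmap _
      have n1 : dmap (σ' e) ≠ db := fun hc => hnPb (hc ▸ hPde)
      have n2 : dmap (σ' e) ≠ da := fun hc => hnPa (hc ▸ hPde)
      have n3 : dmap (σ' e) ≠ t := by
        intro hc
        have h3 : σ' e = t' := dmap_injective (hc.trans ht'map.symm)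
        exact h1 (by rw [← h3, Equiv.Perm.inv_apply_self])
      have n4 : dmap (σ' e) ≠ db' := fun hc => hnPb' (hc ▸ hPde)
      have n5 : dmap (σ' e) ≠ s' := fun hc => h2 (σ'.injective (dmap_injective (hc.trans hds')))
      have n6 : dmap (σ' e) ≠ da' := fun hc => hnPa' (hc ▸ hPde)
      rw [hgf]; dsimp only
      rw [if_neg n1, if_neg n2, if_neg n3, if_neg n4, if_neg n5, if_neg n6,
        dif_pos hPde, pdInv_dmap, Equiv.Perm.inv_apply_self]
    intro d
    by_cases hPd : Pd v d
    · by_cases h1 : d = x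
      · rw [h1, hσf_x, hgf]; dsimp only
        rw [if_neg (Ne.symm hnbda'), if_neg (Ne.symm hnada'), if_neg (Ne.symm hta'),
          if_neg hna'b', if_neg (Ne.symm hs'a'), if_pos rfl]
      · by_cases h2 : d = t2
        · rw [h2, hσf_t2, hgf]; dsimp only
          rw [if_neg (Ne.symm hnbdb'), if_neg (Ne.symm hnadb'), if_neg (Ne.symm htb'),
            if_pos rfl]
        · have hd : d = dmap (pdInv d hPd) := (dmap_pdInv d hPd).symm
          have he1 : pdInv d hPd ≠ σ'⁻¹ t' :=
            fun hc => h1 (by rw [hd, hc, ← hdx])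
          have he2 : pdInv d hPd ≠ t'.symm :=
            fun hc => h2 (by rw [hd, hc, ht'symm])
          rw [hd, hσf_gen _ he1 he2, hgen _ he1 he2]
    · rcases dart_cases hdeg hvu hvw huw d hPd with h | h | h | h
      · rw [h, ← hda, hσf_da, hgf]; dsimp only
        rw [if_pos rfl]
      · rw [h, ← hdb, hσf_db, hgf]; dsimp only
        rw [if_neg hnadab, if_pos rfl]
      · rw [h, ← hda', hσf_da', hgf]; dsimp only
        rw [if_neg htb, if_neg hta, if_pos rfl]
      · rw [h, ← hdb', hσf_db', hgf]; dsimp only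
        rw [if_neg hs'b, if_neg hs'a, if_neg hs't, if_neg hs'b', if_pos rfl]
  set σ : Equiv.Perm G.Dart :=
    Equiv.ofBijective σf (Finite.injective_iff_bijective.mp
      (Function.LeftInverse.injective hgf_left)) with hσdef
  have hσapp : ∀ d, σ d = σf d := fun d => rfl
  have hrot : Genus.IsRotationSystem G σ := by
    constructor
    · intro d
      by_cases hPd : Pd v d
      · by_cases h1 : d = x
        · rw [hσapp, h1, hσf_x, hxfst]
        · by_cases h2 : d = t2
          · rw [hσapp, h2, hσf_t2]
          · have hd : d = dmap (pdInv d hPd) := (dmap_pdInv d hPd).symm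
            have he1 : pdInv d hPd ≠ σ'⁻¹ t' := fun hc => h1 (by rw [hd, hc, ← hdx])
            have he2 : pdInv d hPd ≠ t'.symm := fun hc => h2 (by rw [hd, hc, ht'symm])
            rw [hσapp, hd, hσf_gen _ he1 he2, dmap_fst, dmap_fst, hfst']
      · rcases dart_cases hdeg hvu hvw huw d hPd with h | h | h | h
        · rw [hσapp, h, ← hda, hσf_da]
        · rw [hσapp, h, ← hdb, hσf_db]
        · rw [hσapp, h, ← hda', hσf_da']
        · rw [hσapp, h, ← hdb', hσf_db', hs'fst]
    · have hyp0 : ∀ e : (Gd G v).Dart,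
          dmap (σ' e) = σ (dmap e) ∨ dmap (σ' e) = σ (σ (dmap e)) := by
        intro e
        by_cases h1 : e = σ'⁻¹ t'
        · right
          rw [h1, Equiv.Perm.apply_inv_self, ht'map, ← hdx, hσapp x, hσf_x, hσapp da',
            hσf_da']
        · by_cases h2 : e = t'.symm
          · right
            rw [h2, ← hds', ht'symm, hσapp t2, hσf_t2, hσapp db', hσf_db']
          · left
            rw [hσapp, hσf_gen e h1 h2]
      have reach : ∀ e e' : (Gd G v).Dart, e.fst.val = e'.fst.val →
          ∃ n, (σ ^ n) (dmap e) = dmap e' := fun e e' hf =>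
        ins_reach hyp0 e e' (hσ'.2 e e' (Subtype.ext hf))
      have hto : ∀ d : G.Dart, d.fst ≠ v → ∃ (e : (Gd G v).Dart) (k : ℕ),
          (σ ^ k) d = dmap e ∧ e.fst.val = d.fst := by
        intro d hdv
        by_cases hPd : Pd v d
        · exact ⟨pdInv d hPd, 0, (dmap_pdInv d hPd).symm, rfl⟩
        · rcases dart_cases hdeg hvu hvw huw d hPd with h | h | h | h
          · exact absurd (by rw [h] : d.fst = v) hdv
          · exact absurd (by rw [h] : d.fst = v) hdv
          · refine ⟨t', 1, ?_, ?_⟩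
            · rw [pow_one, h, ← hda', hσapp, hσf_da', ht'map]
            · rw [h]
              rfl
          · refine ⟨σ' t'.symm, 1, ?_, ?_⟩
            · rw [pow_one, h, ← hdb', hσapp, hσf_db', hds']
            · rw [h, hfst']
              rfl
      have hfrom : ∀ d : G.Dart, d.fst ≠ v → ∃ (e : (Gd G v).Dart) (k : ℕ),
          (σ ^ k) (dmap e) = d ∧ e.fst.val = d.fst := by
        intro d hdv
        by_cases hPd : Pd v d
        · exact ⟨pdInv d hPd, 0, dmap_pdInv d hPd, rfl⟩
        · rcases dart_cases hdeg hvu hvw huw d hPd with h | h | h | h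
          · exact absurd (by rw [h] : d.fst = v) hdv
          · exact absurd (by rw [h] : d.fst = v) hdv
          · refine ⟨σ'⁻¹ t', 1, ?_, ?_⟩
            · rw [pow_one, ← hdx, hσapp, hσf_x, h, ← hda']
            · rw [hfstinv', h]
              rfl
          · refine ⟨t'.symm, 1, ?_, ?_⟩
            · rw [pow_one, ht'symm, hσapp, hσf_t2, h, ← hdb']
            · rw [h]
              rfl
      intro d d' hf
      by_cases hv1 : d.fst = v
      · have hv2 : d'.fst = v := by rw [← hf]; exact hv1
        rcases dart_at_v hdeg hvu hvw huw d hv1 with h1 | h1 <;>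
          rcases dart_at_v hdeg hvu hvw huw d' hv2 with h2 | h2
        · exact ⟨0, by rw [pow_zero, h1, h2]; rfl⟩
        · exact ⟨1, by rw [pow_one, h1, ← hda, h2, ← hdb, hσapp, hσf_da]⟩
        · exact ⟨1, by rw [pow_one, h1, ← hdb, h2, ← hda, hσapp, hσf_db]⟩
        · exact ⟨0, by rw [pow_zero, h1, h2]; rfl⟩
      · have hv2 : d'.fst ≠ v := by rw [← hf]; exact hv1
        obtain ⟨e, k, hk, hke⟩ := hto d hv1
        obtain ⟨e', k', hk', hke'⟩ := hfrom d' hv2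
        obtain ⟨n, hn⟩ := reach e e' (by rw [hke, hke', hf])
        refine ⟨k' + (n + k), ?_⟩
        rw [pow_add, pow_add, Perm.mul_apply, Perm.mul_apply, hk, hn, hk']
  -- the extended face permutation
  set φ' : Equiv.Perm (Gd G v).Dart := Genus.facePerm (Gd G v) σ' with hφ'
  set ψf : G.Dart → G.Dart := fun d => if h : Pd v d then dmap (φ' (pdInv d h)) else d with hψf
  have hψf_inj : Function.Injective ψf := by
    intro d1 d2 hc
    rw [hψf] at hc
    dsimp only at hc
    by_cases h1 : Pd v d1 <;> by_cases h2 : Pd v d2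
    · rw [dif_pos h1, dif_pos h2] at hc
      have h3 := φ'.injective (dmap_injective hc)
      have h4 := congrArg dmap h3
      rwa [dmap_pdInv, dmap_pdInv] at h4
    · rw [dif_pos h1, dif_neg h2] at hc
      exact absurd (hc ▸ Pd_dmap (φ' (pdInv d1 h1))) h2
    · rw [dif_neg h1, dif_pos h2] at hc
      exact absurd (hc ▸ Pd_dmap (φ' (pdInv d2 h2))) h1
    · rwa [dif_neg h1, dif_neg h2] at hc
  set ψ0 : Equiv.Perm G.Dart :=
    Equiv.ofBijective ψf (Finite.injective_iff_bijective.mp hψf_inj) with hψ0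
  have hψ0app : ∀ d, ψ0 d = ψf d := fun d => rfl
  have hψ0comm : ∀ e, ψ0 (dmap e) = dmap (φ' e) := by
    intro e
    rw [hψ0app, hψf]
    dsimp only
    rw [dif_pos (Pd_dmap e), pdInv_dmap]
  have hψ0fix : ∀ d, ¬ Pd v d → ψ0 d = d := by
    intro d h
    rw [hψ0app, hψf]
    dsimp only
    rw [dif_neg h]
  have hcyc0 : cyc ψ0 = cyc φ' + 4 := by
    have hext := cyc_extend dmap_injective φ' ψ0 hψ0comm (fun z hz =>
      hψ0fix z (fun hP => by obtain ⟨e, he⟩ := (Pd_range z).mp hP; exact hz e he))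
    rw [hext]
    congr 1
    calc Nat.card {z : G.Dart // ∀ e, dmap e ≠ z}
        = Nat.card {z : G.Dart // ¬ Pd v z} := Nat.card_congr (Equiv.subtypeEquivRight (fun z => by
            rw [Pd_range]
            exact not_exists.symm))
      _ = 4 := card_notPd hdeg hvu hvw huw
  have hface : ∀ d : G.Dart, Genus.facePerm G σ d = σ d.symm := fun d => rfl
  have hkey : Genus.facePerm G σ = Equiv.swap t da' * (Equiv.swap da' db * (Equiv.swap db s' *
      (Equiv.swap s' db' * (Equiv.swap db' da * ψ0)))) := by
    apply Equiv.ext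
    intro d
    simp only [Perm.mul_apply]
    rw [hface]
    by_cases hPd : Pd v d
    · have hPds : Pd v d.symm := Pd_symm hPd
      have hψval : ψ0 d = dmap (σ' (pdInv d.symm hPds)) := by
        have h0 : ψ0 d = dmap (φ' (pdInv d hPd)) := by
          rw [hψ0app, hψf]
          dsimp only
          rw [dif_pos hPd]
        rw [h0, hφ']
        show dmap ((σ' * Genus.dartRev (Gd G v)) (pdInv d hPd)) = _
        rw [Perm.mul_apply]
        have hrev : Genus.dartRev (Gd G v) (pdInv d hPd) = pdInv d.symm hPds :=
          Dart.ext _ _ rfl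
        rw [hrev]
      by_cases h1 : pdInv d.symm hPds = σ'⁻¹ t'
      · have hψv : ψ0 d = t := by rw [hψval, h1, Equiv.Perm.apply_inv_self, ht'map]
        have hdsymm : d.symm = x := by rw [← dmap_pdInv d.symm hPds, h1, ← hdx]
        rw [hdsymm, hσapp, hσf_x, hψv,
          Equiv.swap_apply_of_ne_of_ne htb' hta,
          Equiv.swap_apply_of_ne_of_ne (Ne.symm hs't) htb',
          Equiv.swap_apply_of_ne_of_ne htb (Ne.symm hs't),
          Equiv.swap_apply_of_ne_of_ne hta' htb,
          Equiv.swap_apply_left]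
      · by_cases h2 : pdInv d.symm hPds = t'.symm
        · have hψv : ψ0 d = s' := by rw [hψval, h2, ← hds']
          have hdsymm : d.symm = t2 := by rw [← dmap_pdInv d.symm hPds, h2, ht'symm]
          rw [hdsymm, hσapp, hσf_t2, hψv,
            Equiv.swap_apply_of_ne_of_ne hs'b' hs'a,
            Equiv.swap_apply_left,
            Equiv.swap_apply_of_ne_of_ne (Ne.symm hnbdb') (Ne.symm hs'b'),
            Equiv.swap_apply_of_ne_of_ne (Ne.symm hna'b') (Ne.symm hnbdb'),
            Equiv.swap_apply_of_ne_of_ne (Ne.symm htb') (Ne.symm hna'b')]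
        · have hds2 : d.symm = dmap (pdInv d.symm hPds) := (dmap_pdInv _ _).symm
          set Z : G.Dart := dmap (σ' (pdInv d.symm hPds)) with hdZ
          have hPZ : Pd v Z := Pd_dmap _
          have z1 : Z ≠ db' := fun hc => hnPb' (hc ▸ hPZ)
          have z2 : Z ≠ da := fun hc => hnPa (hc ▸ hPZ)
          have z3 : Z ≠ s' := fun hc =>
            h2 (σ'.injective (dmap_injective ((hdZ.symm.trans hc).trans hds')))
          have z4 : Z ≠ db := fun hc => hnPb (hc ▸ hPZ)
          have z5 : Z ≠ da' := fun hc => hnPa' (hc ▸ hPZ)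
          have z6 : Z ≠ t := by
            intro hc
            have h3 : σ' (pdInv d.symm hPds) = t' :=
              dmap_injective ((hdZ.symm.trans hc).trans ht'map.symm)
            exact h1 (by rw [← h3, Equiv.Perm.inv_apply_self])
          have hψv : ψ0 d = Z := by rw [hψval, hdZ]
          rw [hds2, hσapp, hσf_gen _ h1 h2, ← hdZ, hψv,
            Equiv.swap_apply_of_ne_of_ne z1 z2,
            Equiv.swap_apply_of_ne_of_ne z3 z1,
            Equiv.swap_apply_of_ne_of_ne z4 z3,
            Equiv.swap_apply_of_ne_of_ne z5 z4,
            Equiv.swap_apply_of_ne_of_ne z6 z5]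
    · rcases dart_cases hdeg hvu hvw huw d hPd with h | h | h | h
      · rw [h, ← hda, hsymm_a, hσapp, hσf_da', hψ0fix da hnPa,
          Equiv.swap_apply_right, Equiv.swap_apply_right, Equiv.swap_apply_right,
          Equiv.swap_apply_right, Equiv.swap_apply_right]
      · rw [h, ← hdb, hsymm_b, hσapp, hσf_db', hψ0fix db hnPb,
          Equiv.swap_apply_of_ne_of_ne hnbdb' (Ne.symm hnadab),
          Equiv.swap_apply_of_ne_of_ne (Ne.symm hs'b) hnbdb',
          Equiv.swap_apply_left,
          Equiv.swap_apply_of_ne_of_ne hs'a' hs'b,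
          Equiv.swap_apply_of_ne_of_ne hs't hs'a']
      · rw [h, ← hda', hsymm_a', hσapp, hσf_da, hψ0fix da' hnPa',
          Equiv.swap_apply_of_ne_of_ne hna'b' (Ne.symm hnada'),
          Equiv.swap_apply_of_ne_of_ne (Ne.symm hs'a') hna'b',
          Equiv.swap_apply_of_ne_of_ne (Ne.symm hnbda') (Ne.symm hs'a'),
          Equiv.swap_apply_left,
          Equiv.swap_apply_of_ne_of_ne (Ne.symm htb) hnbda']
      · rw [h, ← hdb', hsymm_b', hσapp, hσf_db, hψ0fix db' hnPb',
          Equiv.swap_apply_left,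
          Equiv.swap_apply_of_ne_of_ne (Ne.symm hs'a) hnadb',
          Equiv.swap_apply_of_ne_of_ne hnadab (Ne.symm hs'a),
          Equiv.swap_apply_of_ne_of_ne hnada' hnadab,
          Equiv.swap_apply_of_ne_of_ne (Ne.symm hta) hnada']
  obtain ⟨k, hk4, _, heqcase⟩ := cyc_six ψ0 da db da' db' t s'
    hnadab hnada' hnadb' (Ne.symm hta) (Ne.symm hs'a) hnbda' hnbdb' (Ne.symm htb)
    (Ne.symm hs'b) hna'b' (Ne.symm hta') (Ne.symm hs'a') (Ne.symm htb') (Ne.symm hs'b')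
    (Ne.symm hs't)
    (hψ0fix da hnPa) (hψ0fix db hnPb) (hψ0fix da' hnPa') (hψ0fix db' hnPb')
  have hXY0 : ψ0 t = s' := by
    rw [← ht'map, hψ0comm, hφ']
    have hrev2 : Genus.facePerm (Gd G v) σ' t' = σ' t'.symm := rfl
    rw [hrev2, hds']
  have heq := heqcase hXY0
  rw [← hkey] at heq
  refine ⟨σ, hrot, ?_⟩
  rw [numFaces_eq_cyc, numFaces_eq_cyc, ← hφ']
  omega


section conn
open SimpleGraph

variable {V : Type*} [DecidableEq V] [Fintype V] {G : SimpleGraph V} [DecidableRel G.Adj]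
  {v u w : V}

lemma connected_del (hconn : G.Connected) (hdeg : G.degree v = 2) (hvu : G.Adj v u)
    (hvw : G.Adj v w) (huw : u ≠ w) (hadj : G.Adj u w) : (Gd G v).Connected := by
  have key : ∀ (n : ℕ) (a b : V) (p : G.Walk a b), p.length ≤ n → ∀ (ha : a ≠ v) (hb : b ≠ v),
      (Gd G v).Reachable ⟨a, ha⟩ ⟨b, hb⟩ := by
    intro n
    induction n with
    | zero =>
      intro a b p hl ha hb
      cases p with
      | nil => exact Reachable.refl _
      | cons h q => simp [Walk.length_cons] at hl
    | succ n ih =>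
      intro a b p hl ha hb
      cases p with
      | nil => exact Reachable.refl _
      | @cons _ c _ hadj1 q =>
        rw [Walk.length_cons] at hl
        by_cases hc : c = v
        · cases q with
          | nil => exact absurd hc hb
          | @cons _ c2 _ hadj2 q2 =>
            rw [Walk.length_cons] at hl
            have ha2 : a = u ∨ a = w :=
              neighbor_eq hdeg hvu hvw huw (show G.Adj v a from (hc ▸ hadj1).symm)
            have hc2 : c2 = u ∨ c2 = w :=
              neighbor_eq hdeg hvu hvw huw (show G.Adj v c2 from hc ▸ hadj2)
            have hc2v : c2 ≠ v := by
              rcases hc2 with rfl | rfl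
              · exact hvu.ne'
              · exact hvw.ne'
            have hr := ih c2 b q2 (by omega) hc2v hb
            by_cases hac : a = c2
            · subst hac
              exact hr
            · have hadj3 : G.Adj a c2 := by
                rcases ha2 with rfl | rfl <;> rcases hc2 with rfl | rfl
                · exact absurd rfl hac
                · exact hadj
                · exact hadj.symm
                · exact absurd rfl hac
              have : (Gd G v).Adj ⟨a, ha⟩ ⟨c2, hc2v⟩ := hadj3
              exact this.reachable.trans hr
        · have hr := ih c b q (by omega) hc hb
          have : (Gd G v).Adj ⟨a, ha⟩ ⟨c, hc⟩ := hadj1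
          exact this.reachable.trans hr
  rw [connected_iff]
  refine ⟨?_, ⟨⟨u, hvu.ne'⟩⟩⟩
  intro a b
  obtain ⟨p⟩ := hconn.preconnected a.val b.val
  have h := key p.length a.val b.val p le_rfl a.prop b.prop
  simpa using h

end conn

end del
end DelAux

open SimpleGraph in
/-- If `G` is a finite connected simple graph with at least four vertices and
`v` is a vertex of degree 2 whose two distinct neighbours `u` and `w` are adjacent in `G`,
then the graph `G − v` obtained by deleting `v` (and its two incident edges) is connected
and has the same genus as `G`. -/
theorem delete_degree_two_vertex_adjacent_neighbours_same_genus
    {V : Type*} [Fintype V] [DecidableEq V] (G : SimpleGraph V) [DecidableRel G.Adj]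
    (hconn : G.Connected) (hcard : 4 ≤ Fintype.card V)
    (v u w : V) (hdeg : G.degree v = 2)
    (hvu : G.Adj v u) (hvw : G.Adj v w) (huw : u ≠ w) (hadj : G.Adj u w) :
    (G.comap (Subtype.val : {x : V // x ≠ v} → V)).Connected ∧
      ∃ g : ℚ, IsLeast (Genus.genusSet G) g ∧
        IsLeast (Genus.genusSet (G.comap (Subtype.val : {x : V // x ≠ v} → V))) g := by
    classical
  refine ⟨DelAux.connected_del hconn hdeg hvu hvw huw hadj, ?_⟩
  have hE := DelAux.card_E (G := G) (v := v) hdeg hvu hvw huw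
  have hV := DelAux.card_V' (V := V) (v := v) rfl
  have harith : ∀ (σ : Equiv.Perm G.Dart) (σ' : Equiv.Perm (DelAux.Gd G v).Dart),
      Genus.numFaces G σ ≤ Genus.numFaces (DelAux.Gd G v) σ' + 1 →
      Genus.embGenus (DelAux.Gd G v) σ' ≤ Genus.embGenus G σ := by
    intro σ σ' hF
    unfold Genus.embGenus
    rw [hE, ← hV]
    have hFq : (Genus.numFaces G σ : ℚ) ≤ (Genus.numFaces (DelAux.Gd G v) σ' : ℚ) + 1 := by
      exact_mod_cast hF
    push_cast
    linarith
  have harith2 : ∀ (σ : Equiv.Perm G.Dart) (σ' : Equiv.Perm (DelAux.Gd G v).Dart),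
      Genus.numFaces G σ = Genus.numFaces (DelAux.Gd G v) σ' + 1 →
      Genus.embGenus G σ = Genus.embGenus (DelAux.Gd G v) σ' := by
    intro σ σ' hF
    unfold Genus.embGenus
    rw [hE, ← hV, hF]
    push_cast
    ring
  have hfin : (Genus.genusSet G).Finite :=
    Set.Finite.subset (Set.finite_range (Genus.embGenus G))
      (by rintro g ⟨σ, _, rfl⟩; exact ⟨σ, rfl⟩)
  have hfin' : (Genus.genusSet (DelAux.Gd G v)).Finite :=
    Set.Finite.subset (Set.finite_range (Genus.embGenus (DelAux.Gd G v)))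
      (by rintro g ⟨σ, _, rfl⟩; exact ⟨σ, rfl⟩)
  obtain ⟨σ0, hσ0⟩ := DelAux.exists_rotationSystem G
  have hne : (Genus.genusSet G).Nonempty := ⟨_, σ0, hσ0, rfl⟩
  obtain ⟨g, hgmem, hgmin⟩ := Set.exists_min_image _ id hfin hne
  obtain ⟨σg, hσg_rot, hσg_val⟩ := id hgmem
  obtain ⟨σ'd, hrot'd, hFle⟩ := DelAux.deletion hdeg hvu hvw huw hadj σg hσg_rot
  have hne' : (Genus.genusSet (DelAux.Gd G v)).Nonempty := ⟨_, σ'd, hrot'd, rfl⟩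
  obtain ⟨g', hg'mem, hg'min⟩ := Set.exists_min_image _ id hfin' hne'
  have h1 : g' ≤ g := by
    have hle := hg'min _ (show Genus.embGenus (DelAux.Gd G v) σ'd ∈ _ from ⟨σ'd, hrot'd, rfl⟩)
    have h2 := harith σg σ'd hFle
    calc g' ≤ Genus.embGenus (DelAux.Gd G v) σ'd := hle
      _ ≤ Genus.embGenus G σg := h2
      _ = g := hσg_val
  have h2 : g ≤ g' := by
    obtain ⟨σ'm, hσ'm_rot, hσ'm_val⟩ := id hg'mem
    obtain ⟨σi, hσi_rot, hFeq⟩ := DelAux.insertion hdeg hvu hvw huw hadj σ'm hσ'm_rot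
    have hle := hgmin _ (show Genus.embGenus G σi ∈ _ from ⟨σi, hσi_rot, rfl⟩)
    calc g ≤ Genus.embGenus G σi := hle
      _ = Genus.embGenus (DelAux.Gd G v) σ'm := harith2 σi σ'm hFeq
      _ = g' := hσ'm_val
  have hgg : g' = g := le_antisymm h1 h2
  refine ⟨g, ⟨hgmem, fun b hb => hgmin b hb⟩, ?_⟩
  rw [← hgg]
  exact ⟨hg'mem, fun b hb => hg'min b hb⟩
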